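/- Let f : ℝⁿ → ℝ be f(x, y) = y − 1/h(x) with h(x) = 1 + Σ x_i², n ≥ 2. Then f is not proper at any value c ∈ ℝ (every level is unbounded and f⁻¹ of any neighbourhood of c is unbounded and closed but not compact), and there is no nonzero vector v ∈ ℝⁿ such that the directional derivative ∂_v f vanishes identically; in particular f cannot be written as g ∘ π for any function g : ℝ^m → ℝ and surjective linear projection π : ℝⁿ → ℝ^m with m < n. -/

import Mathlib

/-- f(x,y) = y − 1/h(x), h(x) = 1 + Σ xᵢ², is proper at no value c; no
nonzero direction v makes the directional derivative ∂ᵥf vanish identically; and f is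
not of the form g ∘ π for a surjective linear projection π onto a space of strictly
smaller dimension. -/
theorem stmt_17 {m : ℕ} (hm : 1 ≤ m)
    (h : EuclideanSpace ℝ (Fin m) → ℝ)
    (hh : ∀ x, h x = 1 + ∑ i, (x i) ^ 2)
    (f : EuclideanSpace ℝ (Fin m) × ℝ → ℝ)
    (hf : ∀ (x : EuclideanSpace ℝ (Fin m)) (y : ℝ), f (x, y) = y - 1 / h x) :
    (∀ c : ℝ, ¬ ∃ V : Set ℝ, V ∈ nhds c ∧
      ∀ K : Set ℝ, K ⊆ V → IsCompact K → IsCompact (f ⁻¹' K)) ∧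
    (¬ ∃ v : EuclideanSpace ℝ (Fin m) × ℝ, v ≠ 0 ∧
      ∀ z : EuclideanSpace ℝ (Fin m) × ℝ, fderiv ℝ f z v = 0) ∧
    (¬ ∃ (k : ℕ) (_ : k < m + 1) (g : EuclideanSpace ℝ (Fin k) → ℝ)
      (π : (EuclideanSpace ℝ (Fin m) × ℝ) →ₗ[ℝ] EuclideanSpace ℝ (Fin k)),
      Function.Surjective π ∧ f = g ∘ π) := by
  have i0 : Fin m := ⟨0, hm⟩
  -- explicit form of f
  have hfeq : f = fun p : EuclideanSpace ℝ (Fin m) × ℝ =>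
      p.2 - (1 + ∑ i, (p.1 i) ^ 2)⁻¹ := by
    funext p
    rw [show p = (p.1, p.2) from rfl, hf, hh, one_div]
  have hsumnn : ∀ x : EuclideanSpace ℝ (Fin m), (0:ℝ) ≤ ∑ i, (x i) ^ 2 :=
    fun x => Finset.sum_nonneg fun i _ => sq_nonneg _
  have hne : ∀ x : EuclideanSpace ℝ (Fin m), (1 + ∑ i, (x i) ^ 2) ≠ 0 := by
    intro x
    have := hsumnn x
    positivity
  -- differentiability
  have hdiff : Differentiable ℝ f := by
    rw [hfeq]
    apply Differentiable.sub differentiable_snd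
    apply Differentiable.inv
    · apply Differentiable.const_add
      apply Differentiable.fun_sum
      intro i _
      have h1 : Differentiable ℝ (fun p : EuclideanSpace ℝ (Fin m) × ℝ => p.1 i) := by
        have := ((EuclideanSpace.proj (𝕜 := ℝ) i).differentiable.comp
          (differentiable_fst (E := EuclideanSpace ℝ (Fin m)) (F := ℝ) (𝕜 := ℝ)))
        exact this
      exact h1.pow 2
    · intro p; exact hne p.1
  -- chain rule along lines
  have hchain : ∀ (z v : EuclideanSpace ℝ (Fin m) × ℝ),
      HasDerivAt (fun t : ℝ => f (z + t • v)) (fderiv ℝ f z v) 0 := by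
    intro z v
    have h1 : HasDerivAt (fun t : ℝ => z + t • v) v 0 := by
      simpa using ((hasDerivAt_id (0:ℝ)).smul_const v).const_add z
    have h2 : HasFDerivAt f (fderiv ℝ f z) ((fun t : ℝ => z + t • v) 0) := by
      simpa using (hdiff z).hasFDerivAt
    exact h2.comp_hasDerivAt 0 h1
  -- key: any direction with everywhere-vanishing directional derivative is zero
  have key : ∀ v : EuclideanSpace ℝ (Fin m) × ℝ,
      (∀ z, fderiv ℝ f z v = 0) → v = 0 := by
    intro v hv
    obtain ⟨u, s⟩ := v
    set S : ℝ := ∑ i, (u i) ^ 2 with hS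
    have hSnn : (0:ℝ) ≤ S := hsumnn u
    -- First: s = 0, using the line through 0
    have hs : s = 0 := by
      have hc := hchain 0 (u, s)
      have heq : (fun t : ℝ => f ((0 : EuclideanSpace ℝ (Fin m) × ℝ) + t • (u, s)))
          = fun t : ℝ => t * s - (1 + t ^ 2 * S)⁻¹ := by
        funext t
        rw [hfeq]
        simp only [zero_add, Prod.smul_fst, Prod.smul_snd, smul_eq_mul]
        have hsum : ∑ i, ((t • u) i) ^ 2 = t ^ 2 * S := by
          rw [Finset.mul_sum]
          refine Finset.sum_congr rfl fun i _ => ?_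
          simp only [PiLp.smul_apply, smul_eq_mul]
          ring
        rw [hsum]
      rw [heq] at hc
      have hc2 : HasDerivAt (fun t : ℝ => t * s - (1 + t ^ 2 * S)⁻¹) s 0 := by
        have ha : HasDerivAt (fun t : ℝ => t * s) s 0 := by
          simpa using (hasDerivAt_id (0:ℝ)).mul_const s
        have hb : HasDerivAt (fun t : ℝ => 1 + t ^ 2 * S)
            ((2 * (0:ℝ) ^ 1) * S) 0 := by
          exact ((hasDerivAt_pow 2 (0:ℝ)).mul_const S).const_add 1
        have hb' := hb.inv (by norm_num : (1 + (0:ℝ) ^ 2 * S) ≠ 0)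
        have := ha.sub hb'
        exact this.congr_deriv (by norm_num)
      have := hc.unique hc2
      rw [hv 0] at this
      exact this.symm
    -- Second: S = 0, using the line through (u,0) in direction (u,0)
    have hS0 : S = 0 := by
      have hc := hchain (u, (0:ℝ)) (u, s)
      have heq : (fun t : ℝ => f ((u, (0:ℝ)) + t • (u, s)))
          = fun t : ℝ => 0 - (1 + (1 + t) ^ 2 * S)⁻¹ := by
        funext t
        rw [hfeq]
        simp only [Prod.fst_add, Prod.snd_add, Prod.smul_fst, Prod.smul_snd, smul_eq_mul, hs,
          mul_zero, add_zero]
        have hsum : ∑ i, ((u + t • u) i) ^ 2 = (1 + t) ^ 2 * S := by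
          rw [Finset.mul_sum]
          refine Finset.sum_congr rfl fun i _ => ?_
          simp only [PiLp.add_apply, PiLp.smul_apply, smul_eq_mul]
          ring
        rw [hsum]
      rw [heq] at hc
      have hne2 : (1 + (1 + (0:ℝ)) ^ 2 * S) ≠ 0 := by norm_num; nlinarith
      have hb : HasDerivAt (fun t : ℝ => 1 + (1 + t) ^ 2 * S)
          (((2:ℕ) * (1 + (0:ℝ)) ^ 1 * 1) * S) 0 := by
        exact ((((hasDerivAt_id (0:ℝ)).const_add 1).pow 2).mul_const S).const_add 1
      have hb' := hb.inv hne2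
      have hc2 := (hasDerivAt_const (0:ℝ) (0:ℝ)).sub hb'
      have huniq := hc.unique hc2
      rw [hv (u, 0)] at huniq
      -- 0 = 0 - (-(2*1*1*S)/(1+1*S)^2)
      have h2S : 2 * S / (1 + S) ^ 2 = 0 := by
        field_simp at huniq ⊢
        have hS' : S = 0 := by norm_num at huniq; linarith
        simp [hS']
      have hden : ((1:ℝ) + S) ^ 2 ≠ 0 := by positivity
      have : 2 * S = 0 := by
        field_simp at h2S
        linarith
      linarith
    have hu : u = 0 := by
      have hall := (Finset.sum_eq_zero_iff_of_nonneg
        (fun j _ => sq_nonneg (u j))).mp (hS.symm.trans hS0)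
      have : ∀ i, u i = 0 := fun i =>
        pow_eq_zero_iff (n := 2) (by norm_num) |>.mp (hall i (Finset.mem_univ i))
      ext i
      simpa using this i
    rw [hu, hs]
    rfl
  refine ⟨?_, ?_, ?_⟩
  · -- not proper at any c
    intro c ⟨V, hV, hK⟩
    have hcV : c ∈ V := mem_of_mem_nhds hV
    have hcomp := hK {c} (Set.singleton_subset_iff.mpr hcV) isCompact_singleton
    obtain ⟨r, hr⟩ := hcomp.isBounded.subset_closedBall 0
    -- point with large first coordinate in the fiber
    set t : ℝ := |r| + 1 with ht
    set x : EuclideanSpace ℝ (Fin m) := t • EuclideanSpace.single i0 (1:ℝ) with hx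
    have hmem : (x, c + 1 / h x) ∈ f ⁻¹' {c} := by
      simp only [Set.mem_preimage, Set.mem_singleton_iff, hf]
      ring
    have hball := hr hmem
    rw [Metric.mem_closedBall, dist_zero_right] at hball
    have hnx : ‖x‖ = t := by
      rw [hx, norm_smul, EuclideanSpace.norm_single]
      simp [ht]
      positivity
    have hle : ‖x‖ ≤ ‖(x, c + 1 / h x)‖ := by
      rw [Prod.norm_def]
      exact le_max_left _ _
    have : t ≤ r := le_trans (hnx ▸ hle) hball
    have : r < t := by rw [ht]; cases abs_cases r with
      | inl h' => linarith [h'.1]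
      | inr h' => linarith [h'.1]
    linarith
  · rintro ⟨v, hv0, hv⟩
    exact hv0 (key v hv)
  · rintro ⟨k, hk, g, π, hsurj, hfac⟩
    -- kernel is nontrivial
    have hnotinj : ¬ Function.Injective π := by
      intro hinj
      have hbij : Function.Bijective π := ⟨hinj, hsurj⟩
      have := LinearEquiv.finrank_eq (LinearEquiv.ofBijective π hbij)
      rw [Module.finrank_prod, finrank_euclideanSpace_fin, finrank_euclideanSpace_fin] at this
      simp at this
      omega
    obtain ⟨v, hv0, hvker⟩ : ∃ v : EuclideanSpace ℝ (Fin m) × ℝ, v ≠ 0 ∧ π v = 0 := by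
      by_contra hcon
      push_neg at hcon
      apply hnotinj
      rw [← LinearMap.ker_eq_bot, LinearMap.ker_eq_bot']
      intro w hw
      by_contra hw0
      exact (hcon w hw0) hw
    apply hv0
    apply key
    intro z
    have hc := hchain z v
    have heq : (fun t : ℝ => f (z + t • v)) = fun _ : ℝ => f z := by
      funext t
      rw [hfac]
      simp only [Function.comp_apply, map_add, map_smul, hvker, smul_zero, add_zero]
    rw [heq] at hc
    exact hc.unique (hasDerivAt_const 0 (f z))
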